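/- For any square matrix A over an associative unital algebra, the symmetrized determinant commutes with transposition: sdet(Aᵀ) = (sdet A)ᵀ, where the transpose of an algebra element is interpreted via the algebra's anti-automorphism when A is a matrix algebra; more precisely, over Mat(F,m,m)-valued matrices, sdet(Aᵀ) where each entry is also transposed equals the transpose of sdet A. -/

import Mathlib

open Equiv Matrix BigOperators

noncomputable def sdet (F : Type*) [Field F] {A : Type*} [Ring A] [Algebra F A] {n : ℕ}
    (M : Matrix (Fin n) (Fin n) A) : A :=
  ((n.factorial : F)⁻¹) • ∑ σ : Equiv.Perm (Fin n), ∑ τ : Equiv.Perm (Fin n),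
    ((Equiv.Perm.sign σ : ℤ) * (Equiv.Perm.sign τ : ℤ)) •
      (List.ofFn fun i => M (σ i) (τ i)).prod

lemma ofFn_reverse {n : ℕ} {α : Type*} (f : Fin n → α) :
    (List.ofFn f).reverse = List.ofFn (fun i => f i.rev) := by
  apply List.ext_get <;> simp [List.get_reverse', Fin.rev]
  intro k h1
  exact congrArg f (Fin.ext (by simp; omega))

/-- The symmetrized determinant commutes with transposition: over
Mat(F,m,m)-valued matrices, sdet of the transposed matrix (with each entry
also transposed) equals the transpose of sdet A. -/
theorem sdet_transpose {F : Type*} [Field F] [CharZero F] {m n : ℕ}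
    (A : Matrix (Fin n) (Fin n) (Matrix (Fin m) (Fin m) F)) :
    sdet F (Matrix.of fun i j : Fin n => (A j i)ᵀ) = (sdet F A)ᵀ := by
  unfold sdet
  rw [Matrix.transpose_smul]
  congr 1
  simp only [Matrix.transpose_sum, Matrix.transpose_smul]
  rw [Finset.sum_comm]
  refine Fintype.sum_equiv (Equiv.mulRight (Fin.revPerm : Equiv.Perm (Fin n))) _ _ ?_
  intro a
  refine Fintype.sum_equiv (Equiv.mulRight (Fin.revPerm : Equiv.Perm (Fin n))) _ _ ?_
  intro b
  simp only [Equiv.coe_mulRight]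
  have h2 : (List.ofFn fun i => (Matrix.of fun i j : Fin n => (A j i)ᵀ) (b i) (a i)).prod
      = ((List.ofFn fun i => A ((a * Fin.revPerm : Equiv.Perm (Fin n)) i) ((b * Fin.revPerm : Equiv.Perm (Fin n)) i)).prod)ᵀ := by
    rw [Matrix.transpose_list_prod, List.map_ofFn, ofFn_reverse]
    refine congrArg List.prod (congrArg List.ofFn (funext fun i => ?_))
    simp [Equiv.Perm.mul_apply, Fin.rev_rev]
  rw [h2]
  congr 1
  have hu : Equiv.Perm.sign (a * Fin.revPerm) * Equiv.Perm.sign (b * Fin.revPerm)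
      = Equiv.Perm.sign b * Equiv.Perm.sign a := by
    rw [_root_.map_mul, _root_.map_mul, mul_mul_mul_comm, Int.units_mul_self, mul_one, mul_comm]
  rw [← Units.val_mul, ← Units.val_mul, hu]
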